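/- arXiv:1509.01977 — 2 statements merged into one kernel-verified Lean document; each statement's English description precedes it below -/
import Mathlib

section
/- The function h(x) = log(x/sin(x)) / log(e^{1 - x·cot(x)}·sin(x)/x) is strictly decreasing on (0, π/2), with range (log(π/2)/log(2e/π), 1). -/
open Real Set Filter


lemma nonneg_of_deriv_nonneg (F F' : ℝ → ℝ) (h0 : F 0 = 0)
    (hd : ∀ x, HasDerivAt F (F' x) x) (h' : ∀ x, 0 < x → 0 ≤ F' x) :
    ∀ x, 0 ≤ x → 0 ≤ F x := by
  intro x hx
  have hmono : MonotoneOn F (Ici 0) := by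
    apply monotoneOn_of_deriv_nonneg (convex_Ici 0)
    · exact fun y _ => (hd y).continuousAt.continuousWithinAt
    · intro y hy; exact (hd y).differentiableAt.differentiableWithinAt
    · intro y hy
      rw [interior_Ici] at hy
      rw [(hd y).deriv]; exact h' y hy
  have := hmono (self_mem_Ici) hx hx
  rwa [h0] at this

lemma opoly_hasDerivAt (a3 a5 a7 a9 : ℝ) (x : ℝ) :
    HasDerivAt (fun y : ℝ => y + a3*y^3 + a5*y^5 + a7*y^7 + a9*y^9)
      (1 + 3*a3*x^2 + 5*a5*x^4 + 7*a7*x^6 + 9*a9*x^8) x := by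
  have h := ((((hasDerivAt_id x).add (((hasDerivAt_pow 3 x).const_mul a3))).add
      ((hasDerivAt_pow 5 x).const_mul a5)).add
      ((hasDerivAt_pow 7 x).const_mul a7)).add ((hasDerivAt_pow 9 x).const_mul a9)
  exact h.congr_deriv (by norm_num; ring)

lemma epoly_hasDerivAt (b2 b4 b6 b8 : ℝ) (x : ℝ) :
    HasDerivAt (fun y : ℝ => 1 + b2*y^2 + b4*y^4 + b6*y^6 + b8*y^8)
      (2*b2*x + 4*b4*x^3 + 6*b6*x^5 + 8*b8*x^7) x := by
  have h := ((((hasDerivAt_const x (1:ℝ)).add (((hasDerivAt_pow 2 x).const_mul b2))).add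
      ((hasDerivAt_pow 4 x).const_mul b4)).add
      ((hasDerivAt_pow 6 x).const_mul b6)).add ((hasDerivAt_pow 8 x).const_mul b8)
  exact h.congr_deriv (by norm_num; ring)

lemma sin_ge_3 {x : ℝ} (hx : 0 ≤ x) : x - x^3/6 ≤ sin x := by
  have := nonneg_of_deriv_nonneg
    (fun y => sin y - (y + (-(1/6))*y^3 + 0*y^5 + 0*y^7 + 0*y^9))
    (fun y => cos y - (1 + 3*(-(1/6))*y^2 + 5*0*y^4 + 7*0*y^6 + 9*0*y^8))
    (by norm_num)
    (fun y => (Real.hasDerivAt_sin y).sub (opoly_hasDerivAt _ _ _ _ y))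
    (fun y hy => by nlinarith [Real.one_sub_sq_div_two_le_cos (x := y)]) x hx
  nlinarith [this]

lemma cos_le_4 {x : ℝ} (hx : 0 ≤ x) : cos x ≤ 1 - x^2/2 + x^4/24 := by
  have := nonneg_of_deriv_nonneg
    (fun y => (1 + (-(1/2))*y^2 + (1/24)*y^4 + 0*y^6 + 0*y^8) - cos y)
    (fun y => (2*(-(1/2))*y + 4*(1/24)*y^3 + 6*0*y^5 + 8*0*y^7) - (-sin y))
    (by norm_num)
    (fun y => (epoly_hasDerivAt _ _ _ _ y).sub (Real.hasDerivAt_cos y))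
    (fun y hy => by nlinarith [sin_ge_3 hy.le]) x hx
  nlinarith [this]

lemma sin_le_5 {x : ℝ} (hx : 0 ≤ x) : sin x ≤ x - x^3/6 + x^5/120 := by
  have := nonneg_of_deriv_nonneg
    (fun y => (y + (-(1/6))*y^3 + (1/120)*y^5 + 0*y^7 + 0*y^9) - sin y)
    (fun y => (1 + 3*(-(1/6))*y^2 + 5*(1/120)*y^4 + 7*0*y^6 + 9*0*y^8) - cos y)
    (by norm_num)
    (fun y => (opoly_hasDerivAt _ _ _ _ y).sub (Real.hasDerivAt_sin y))
    (fun y hy => by nlinarith [cos_le_4 hy.le]) x hx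
  nlinarith [this]

lemma cos_ge_6 {x : ℝ} (hx : 0 ≤ x) : 1 - x^2/2 + x^4/24 - x^6/720 ≤ cos x := by
  have := nonneg_of_deriv_nonneg
    (fun y => cos y - (1 + (-(1/2))*y^2 + (1/24)*y^4 + (-(1/720))*y^6 + 0*y^8))
    (fun y => -sin y - (2*(-(1/2))*y + 4*(1/24)*y^3 + 6*(-(1/720))*y^5 + 8*0*y^7))
    (by norm_num)
    (fun y => (Real.hasDerivAt_cos y).sub (epoly_hasDerivAt _ _ _ _ y))
    (fun y hy => by nlinarith [sin_le_5 hy.le]) x hx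
  nlinarith [this]

lemma sin_ge_7 {x : ℝ} (hx : 0 ≤ x) : x - x^3/6 + x^5/120 - x^7/5040 ≤ sin x := by
  have := nonneg_of_deriv_nonneg
    (fun y => sin y - (y + (-(1/6))*y^3 + (1/120)*y^5 + (-(1/5040))*y^7 + 0*y^9))
    (fun y => cos y - (1 + 3*(-(1/6))*y^2 + 5*(1/120)*y^4 + 7*(-(1/5040))*y^6 + 9*0*y^8))
    (by norm_num)
    (fun y => (Real.hasDerivAt_sin y).sub (opoly_hasDerivAt _ _ _ _ y))
    (fun y hy => by nlinarith [cos_ge_6 hy.le]) x hx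
  nlinarith [this]

lemma cos_le_8 {x : ℝ} (hx : 0 ≤ x) : cos x ≤ 1 - x^2/2 + x^4/24 - x^6/720 + x^8/40320 := by
  have := nonneg_of_deriv_nonneg
    (fun y => (1 + (-(1/2))*y^2 + (1/24)*y^4 + (-(1/720))*y^6 + (1/40320)*y^8) - cos y)
    (fun y => (2*(-(1/2))*y + 4*(1/24)*y^3 + 6*(-(1/720))*y^5 + 8*(1/40320)*y^7) - (-sin y))
    (by norm_num)
    (fun y => (epoly_hasDerivAt _ _ _ _ y).sub (Real.hasDerivAt_cos y))
    (fun y hy => by nlinarith [sin_ge_7 hy.le]) x hx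
  nlinarith [this]

lemma sin_le_9 {x : ℝ} (hx : 0 ≤ x) :
    sin x ≤ x - x^3/6 + x^5/120 - x^7/5040 + x^9/362880 := by
  have := nonneg_of_deriv_nonneg
    (fun y => (y + (-(1/6))*y^3 + (1/120)*y^5 + (-(1/5040))*y^7 + (1/362880)*y^9) - sin y)
    (fun y => (1 + 3*(-(1/6))*y^2 + 5*(1/120)*y^4 + 7*(-(1/5040))*y^6 + 9*(1/362880)*y^8) - cos y)
    (by norm_num)
    (fun y => (opoly_hasDerivAt _ _ _ _ y).sub (Real.hasDerivAt_sin y))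
    (fun y hy => by nlinarith [cos_le_8 hy.le]) x hx
  nlinarith [this]


lemma Dpos {y : ℝ} (h0 : 0 ≤ y) (hY : y ≤ 2.4964) :
    0 < 4/135 - (8/945)*y + (169/151200)*y^2 - (271/2268000)*y^3 - (491/63504000)*y^4
      + (391/53581500)*y^5 - (4724113/2880541440000)*y^6 + (636407/2880541440000)*y^7
      - (1702291/86416243200000)*y^8 + (348041/291654820800000)*y^9
      - (231617/4839309619200000)*y^10 + (2321/2073989836800000)*y^11
      - (817/43553786572800000)*y^12 + (31/152438253004800000)*y^13
      - (1/914629518028800000)*y^14 := by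
  have b1 : y^1 ≤ 2.4964^1 := pow_le_pow_left₀ h0 hY 1
  have b3 : y^3 ≤ 2.4964^3 := pow_le_pow_left₀ h0 hY 3
  have b4 : y^4 ≤ 2.4964^4 := pow_le_pow_left₀ h0 hY 4
  have b6 : y^6 ≤ 2.4964^6 := pow_le_pow_left₀ h0 hY 6
  have b8 : y^8 ≤ 2.4964^8 := pow_le_pow_left₀ h0 hY 8
  have b10 : y^10 ≤ 2.4964^10 := pow_le_pow_left₀ h0 hY 10
  have b12 : y^12 ≤ 2.4964^12 := pow_le_pow_left₀ h0 hY 12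
  have b14 : y^14 ≤ 2.4964^14 := pow_le_pow_left₀ h0 hY 14
  have p2 : 0 ≤ y^2 := by positivity
  have p5 : 0 ≤ y^5 := by positivity
  have p7 : 0 ≤ y^7 := by positivity
  have p9 : 0 ≤ y^9 := by positivity
  have p11 : 0 ≤ y^11 := by positivity
  have p13 : 0 ≤ y^13 := by positivity
  nlinarith [b1, b3, b4, b6, b8, b10, b12, b14, p2, p5, p7, p9, p11, p13]

lemma Tpos {y : ℝ} (h0 : 0 ≤ y) (hY : y ≤ 2.4964) :
    0 < 1 - (4/15)*y^2 + (76/945)*y^3 - (1153/90720)*y^4 + (127/97200)*y^5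
      - (7501/81648000)*y^6 + (2531/571536000)*y^7 - (1/6998400)*y^8
      + (17/6001128000)*y^9 - (1/36006768000)*y^10 := by
  have hy2 : y^2 ≤ 2.4964^2 := pow_le_pow_left₀ h0 hY 2
  have hy4 : y^4 ≤ 2.4964^4 := pow_le_pow_left₀ h0 hY 4
  have hy6 : y^6 ≤ 2.4964^6 := pow_le_pow_left₀ h0 hY 6
  have h4 : y^4 ≤ 2.4964^2*y^2 := by nlinarith [sq_nonneg y]
  have h6 : y^6 ≤ 2.4964^4*y^2 := by nlinarith [sq_nonneg y]
  have h8 : y^8 ≤ 2.4964^6*y^2 := by nlinarith [sq_nonneg y, sq_nonneg (y^3)]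
  have h10 : y^10 ≤ 2.4964^8*y^2 := by nlinarith [sq_nonneg y, sq_nonneg (y^4)]
  have p5 : 0 ≤ y^5 := by positivity
  have p7 : 0 ≤ y^7 := by positivity
  have p9 : 0 ≤ y^9 := by positivity
  have key : 0 < 1 - (34948/100000)*y^2 + (76/945)*y^3 := by
    nlinarith [mul_nonneg (sub_nonneg.2 hY) h0, mul_nonneg (mul_nonneg (sub_nonneg.2 hY) h0) h0,
      mul_nonneg (mul_nonneg (sub_nonneg.2 hY) (sub_nonneg.2 hY)) h0, sq_nonneg y]
  nlinarith [sq_nonneg y, h4, h6, h8, h10, p5, p7, p9, key]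


set_option maxHeartbeats 1600000 in
lemma key_ineq {x : ℝ} (h0 : 0 < x) (hx : x < π/2) :
    2*x^3*(sin x)^2 - (3*x - sin x*cos x)*(sin x)^4 < (x - sin x*cos x)^3 := by
  have hx158 : x ≤ 1.58 := by nlinarith [Real.pi_lt_d2]
  have hy : x^2 ≤ 2.4964 := by nlinarith
  have hy0 : (0:ℝ) ≤ x^2 := sq_nonneg x
  have hsc : sin x * cos x ≤ x - 2*x^3/3 + 2*x^5/15 - 4*x^7/315 + 2*x^9/2835 := by
    have h2 : sin (2*x) ≤ (2*x) - (2*x)^3/6 + (2*x)^5/120 - (2*x)^7/5040 + (2*x)^9/362880 :=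
      sin_le_9 (by linarith)
    rw [Real.sin_two_mul] at h2
    nlinarith [h2]
  have hσ : x - x^3/6 + x^5/120 - x^7/5040 ≤ sin x := sin_ge_7 h0.le
  have hσ0 : 0 < x - x^3/6 + x^5/120 - x^7/5040 := by
    have hq : 0 < 1 - (1/6)*(x^2) + (1/120)*(x^2)^2 - (1/5040)*(x^2)^3 := by
      nlinarith [hy, hy0, sq_nonneg (x^2), mul_le_mul_of_nonneg_left hy (mul_nonneg hy0 hy0)]
    have hid : x - x^3/6 + x^5/120 - x^7/5040
        = x * (1 - (1/6)*(x^2) + (1/120)*(x^2)^2 - (1/5040)*(x^2)^3) := by ring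
    rw [hid]; exact mul_pos h0 hq
  have hs0 : 0 < sin x := lt_of_lt_of_le hσ0 hσ
  have hp0 : 0 < 2*x^3/3 - 2*x^5/15 + 4*x^7/315 - 2*x^9/2835 := by
    have hq : 0 < 2/3 - (2/15)*(x^2) + (4/315)*(x^2)^2 - (2/2835)*(x^2)^3 := by
      nlinarith [hy, hy0, mul_le_mul_of_nonneg_left hy (mul_nonneg hy0 hy0), mul_nonneg hy0 hy0]
    have hid : 2*x^3/3 - 2*x^5/15 + 4*x^7/315 - 2*x^9/2835
        = x^3 * (2/3 - (2/15)*(x^2) + (4/315)*(x^2)^2 - (2/2835)*(x^2)^3) := by ring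
    rw [hid]; exact mul_pos (by positivity) hq
  have hP : 2*x^3/3 - 2*x^5/15 + 4*x^7/315 - 2*x^9/2835 ≤ x - sin x*cos x := by linarith
  have hK : 2*x + (2*x^3/3 - 2*x^5/15 + 4*x^7/315 - 2*x^9/2835) ≤ 3*x - sin x*cos x := by linarith
  have hK0 : 0 < 2*x + (2*x^3/3 - 2*x^5/15 + 4*x^7/315 - 2*x^9/2835) := by linarith
  have hw : (x - x^3/6 + x^5/120 - x^7/5040)^2 ≤ (sin x)^2 := by nlinarith
  -- x^3 ≤ K σ²
  have haux : x^3 ≤ (2*x + (2*x^3/3 - 2*x^5/15 + 4*x^7/315 - 2*x^9/2835)) *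
      (x - x^3/6 + x^5/120 - x^7/5040)^2 := by
    have hT := Tpos hy0 hy
    have hid : (2*x + (2*x^3/3 - 2*x^5/15 + 4*x^7/315 - 2*x^9/2835)) *
        (x - x^3/6 + x^5/120 - x^7/5040)^2 - x^3
        = x^3 * (1 - (4/15)*(x^2)^2 + (76/945)*(x^2)^3 - (1153/90720)*(x^2)^4
          + (127/97200)*(x^2)^5 - (7501/81648000)*(x^2)^6 + (2531/571536000)*(x^2)^7
          - (1/6998400)*(x^2)^8 + (17/6001128000)*(x^2)^9 - (1/36006768000)*(x^2)^10) := by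
      ring
    nlinarith [mul_pos (pow_pos h0 3) hT, hid]
  -- A1 : replace k by K
  have h1 : 2*x^3*(sin x)^2 - (3*x - sin x*cos x)*(sin x)^4 ≤ 2*x^3*(sin x)^2
      - (2*x + (2*x^3/3 - 2*x^5/15 + 4*x^7/315 - 2*x^9/2835))*(sin x)^4 := by
    have hk4 := mul_nonneg (sub_nonneg.2 hK) (pow_nonneg hs0.le 4)
    nlinarith [hk4]
  -- A2 : move from s² to σ²
  have h2 : 0 ≤ ((sin x)^2 - (x - x^3/6 + x^5/120 - x^7/5040)^2) *
      ((2*x + (2*x^3/3 - 2*x^5/15 + 4*x^7/315 - 2*x^9/2835)) *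
        ((sin x)^2 + (x - x^3/6 + x^5/120 - x^7/5040)^2) - 2*x^3) := by
    apply mul_nonneg (by linarith)
    have hKs : (2*x + (2*x^3/3 - 2*x^5/15 + 4*x^7/315 - 2*x^9/2835)) *
        (x - x^3/6 + x^5/120 - x^7/5040)^2 ≤
        (2*x + (2*x^3/3 - 2*x^5/15 + 4*x^7/315 - 2*x^9/2835)) * (sin x)^2 :=
      mul_le_mul_of_nonneg_left hw hK0.le
    nlinarith [haux, hKs]
  have hA2 : 2*x^3*(sin x)^2 - (3*x - sin x*cos x)*(sin x)^4 ≤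
      2*x^3*(x - x^3/6 + x^5/120 - x^7/5040)^2
      - (2*x + (2*x^3/3 - 2*x^5/15 + 4*x^7/315 - 2*x^9/2835))
        * (x - x^3/6 + x^5/120 - x^7/5040)^4 := by
    nlinarith [h1, h2]
  -- A3 : the monster certificate
  have hA3 : 2*x^3*(x - x^3/6 + x^5/120 - x^7/5040)^2
      - (2*x + (2*x^3/3 - 2*x^5/15 + 4*x^7/315 - 2*x^9/2835))
        * (x - x^3/6 + x^5/120 - x^7/5040)^4
      < (2*x^3/3 - 2*x^5/15 + 4*x^7/315 - 2*x^9/2835)^3 := by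
    have hD := Dpos hy0 hy
    have hid : (2*x^3/3 - 2*x^5/15 + 4*x^7/315 - 2*x^9/2835)^3
        - (2*x^3*(x - x^3/6 + x^5/120 - x^7/5040)^2
          - (2*x + (2*x^3/3 - 2*x^5/15 + 4*x^7/315 - 2*x^9/2835))
            * (x - x^3/6 + x^5/120 - x^7/5040)^4)
        = x^9 * (4/135 - (8/945)*(x^2) + (169/151200)*(x^2)^2 - (271/2268000)*(x^2)^3
          - (491/63504000)*(x^2)^4 + (391/53581500)*(x^2)^5
          - (4724113/2880541440000)*(x^2)^6 + (636407/2880541440000)*(x^2)^7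
          - (1702291/86416243200000)*(x^2)^8 + (348041/291654820800000)*(x^2)^9
          - (231617/4839309619200000)*(x^2)^10 + (2321/2073989836800000)*(x^2)^11
          - (817/43553786572800000)*(x^2)^12 + (31/152438253004800000)*(x^2)^13
          - (1/914629518028800000)*(x^2)^14) := by ring
    nlinarith [mul_pos (pow_pos h0 9) hD, hid]
  have hA4 : (2*x^3/3 - 2*x^5/15 + 4*x^7/315 - 2*x^9/2835)^3 ≤ (x - sin x*cos x)^3 :=
    pow_le_pow_left₀ hp0.le hP 3
  linarith


noncomputable def FF (x : ℝ) : ℝ := log (x / sin x)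
noncomputable def GG (x : ℝ) : ℝ := 1 - x * (cos x / sin x) - log (x / sin x)
noncomputable def PH (x : ℝ) : ℝ :=
  log (x / sin x) - (sin x - x * cos x)^2 / (x^2 - x * (sin x * cos x))

lemma hasDerivAt_FF {x : ℝ} (h0 : 0 < x) (hs : 0 < sin x) :
    HasDerivAt FF ((sin x - x * cos x) / (x * sin x)) x := by
  have hq : HasDerivAt (fun y : ℝ => y / sin y)
      ((1 * sin x - x * cos x) / (sin x)^2) x :=
    (hasDerivAt_id x).div (Real.hasDerivAt_sin x) hs.ne'
  have hne : x / sin x ≠ 0 := by positivity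
  have h := hq.log hne
  refine h.congr_deriv ?_
  field_simp

lemma hasDerivAt_GG {x : ℝ} (h0 : 0 < x) (hs : 0 < sin x) :
    HasDerivAt GG ((x^2 - (sin x)^2) / (x * (sin x)^2)) x := by
  have hcs : HasDerivAt (fun y : ℝ => cos y / sin y)
      ((-sin x * sin x - cos x * cos x) / (sin x)^2) x :=
    (Real.hasDerivAt_cos x).div (Real.hasDerivAt_sin x) hs.ne'
  have hx : HasDerivAt (fun y : ℝ => y * (cos y / sin y))
      (1 * (cos x / sin x) + x * ((-sin x * sin x - cos x * cos x) / (sin x)^2)) x :=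
    (hasDerivAt_id x).mul hcs
  have h := ((hasDerivAt_const x (1:ℝ)).sub hx).sub (hasDerivAt_FF h0 hs)
  refine h.congr_deriv ?_
  have hpy := Real.sin_sq_add_cos_sq x
  field_simp
  linear_combination x^2 * hpy

lemma hasDerivAt_PH {x : ℝ} (h0 : 0 < x) (hs : 0 < sin x)
    (hA : 0 < x^2 - x * (sin x * cos x)) :
    HasDerivAt PH
      ((sin x - x * cos x) / (x * sin x)
        - (2 * (sin x - x * cos x) * (x * sin x) * (x^2 - x * (sin x * cos x))
            - (sin x - x * cos x)^2 * (2*x - (sin x * cos x + x * (cos x * cos x + sin x * (-sin x)))))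
          / (x^2 - x * (sin x * cos x))^2) x := by
  have hB : HasDerivAt (fun y : ℝ => (sin y - y * cos y)^2)
      (2 * (sin x - x * cos x) * (x * sin x)) x := by
    have hB1 : HasDerivAt (fun y : ℝ => sin y - y * cos y)
        (cos x - (1 * cos x + x * (-sin x))) x :=
      (Real.hasDerivAt_sin x).sub ((hasDerivAt_id x).mul (Real.hasDerivAt_cos x))
    have h := hB1.pow 2
    exact h.congr_deriv (by norm_num)
  have hA' : HasDerivAt (fun y : ℝ => y^2 - y * (sin y * cos y))
      (2*x - (sin x * cos x + x * (cos x * cos x + sin x * (-sin x)))) x := by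
    have h1 : HasDerivAt (fun y : ℝ => y * (sin y * cos y))
        (1 * (sin x * cos x) + x * (cos x * cos x + sin x * (-sin x))) x :=
      (hasDerivAt_id x).mul ((Real.hasDerivAt_sin x).mul (Real.hasDerivAt_cos x))
    have h := (hasDerivAt_pow 2 x).sub h1
    exact h.congr_deriv (by norm_num)
  exact (hasDerivAt_FF h0 hs).sub (hB.div hA' hA.ne')



-- basic facts
lemma sin_pos {x : ℝ} (h0 : 0 < x) (hx : x < π/2) : 0 < sin x :=
  Real.sin_pos_of_pos_of_lt_pi h0 (lt_trans hx (by linarith [Real.pi_pos]))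

lemma slt {x : ℝ} (h0 : 0 < x) : sin x < x := Real.sin_lt h0

lemma A_pos {x : ℝ} (h0 : 0 < x) (hx : x < π/2) : 0 < x^2 - x * (sin x * cos x) := by
  have hs := sin_pos h0 hx
  have h1 : sin x * cos x ≤ sin x := by
    nlinarith [Real.cos_le_one x, hs]
  nlinarith [slt h0]

lemma B_pos {x : ℝ} (h0 : 0 < x) (hx : x < π/2) : 0 < sin x - x * cos x := by
  have hx158 : x ≤ 1.58 := by nlinarith [Real.pi_lt_d2]
  have h1 := sin_ge_7 h0.le
  have h2 := cos_le_4 h0.le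
  have hy : x^2 ≤ 2.4964 := by nlinarith
  have hq : 0 < 1/3 - x^2/30 - x^4/5040 := by nlinarith [sq_nonneg x, sq_nonneg (x^2)]
  nlinarith [mul_pos (pow_pos h0 3) hq]

lemma Q_pos {x : ℝ} (h0 : 0 < x) (hx : x < π/2) :
    0 < (x^2 - x*(sin x*cos x))^2 - 2*x^2*(sin x)^2*(x^2 - x*(sin x*cos x))
      + x*sin x*(sin x - x*cos x)
        * (2*x - (sin x*cos x + x*(cos x*cos x + sin x*(-sin x)))) := by
  have hpy := Real.sin_sq_add_cos_sq x
  have hid : (x^2 - x*(sin x*cos x))^2 - 2*x^2*(sin x)^2*(x^2 - x*(sin x*cos x))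
      + x*sin x*(sin x - x*cos x)
        * (2*x - (sin x*cos x + x*(cos x*cos x + sin x*(-sin x))))
      = x*((x - sin x*cos x)^3 - (2*x^3*(sin x)^2 - (3*x - sin x*cos x)*(sin x)^4)) := by
    linear_combination (x^2*sin x*(sin x - x*cos x) + x*(sin x)^3*cos x - 3*x^2*(sin x)^2 + 2*x^3*sin x*cos x) * hpy
  rw [hid]
  exact mul_pos h0 (by linarith [key_ineq h0 hx])

lemma deriv_PH_pos {x : ℝ} (h0 : 0 < x) (hx : x < π/2) :
    0 < (sin x - x * cos x) / (x * sin x)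
        - (2 * (sin x - x * cos x) * (x * sin x) * (x^2 - x * (sin x * cos x))
            - (sin x - x * cos x)^2 * (2*x - (sin x * cos x + x * (cos x * cos x + sin x * (-sin x)))))
          / (x^2 - x * (sin x * cos x))^2 := by
  have hs := sin_pos h0 hx
  have hA := A_pos h0 hx
  have hB := B_pos h0 hx
  have hQ := Q_pos h0 hx
  have hid : (sin x - x * cos x) / (x * sin x)
        - (2 * (sin x - x * cos x) * (x * sin x) * (x^2 - x * (sin x * cos x))
            - (sin x - x * cos x)^2 * (2*x - (sin x * cos x + x * (cos x * cos x + sin x * (-sin x)))))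
          / (x^2 - x * (sin x * cos x))^2
      = (sin x - x * cos x) * ((x^2 - x*(sin x*cos x))^2 - 2*x^2*(sin x)^2*(x^2 - x*(sin x*cos x))
          + x*sin x*(sin x - x*cos x)
            * (2*x - (sin x*cos x + x*(cos x*cos x + sin x*(-sin x)))))
        / (x * sin x * (x^2 - x * (sin x * cos x))^2) := by
    rw [div_sub_div _ _ (mul_pos h0 hs).ne' (pow_pos hA 2).ne',
      div_eq_div_iff (mul_ne_zero (mul_pos h0 hs).ne' (pow_pos hA 2).ne') (mul_pos (mul_pos h0 hs) (pow_pos hA 2)).ne']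
    ring
  rw [hid]
  positivity



lemma B_le_cube {x : ℝ} (hx : 0 ≤ x) : sin x - x * cos x ≤ x^3/3 := by
  have := nonneg_of_deriv_nonneg (fun y => y^3/3 - (sin y - y * cos y))
    (fun y => 3*y^(3-1)/3 - (cos y - (1 * cos y + y * (-sin y))))
    (by norm_num)
    (fun y => ((hasDerivAt_pow 3 y).div_const 3).sub
      ((Real.hasDerivAt_sin y).sub ((hasDerivAt_id y).mul (Real.hasDerivAt_cos y))))
    (fun y hy => by
      have h := mul_le_mul_of_nonneg_left (Real.sin_le hy.le) hy.le
      norm_num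
      nlinarith [h]) x hx
  linarith [this]

lemma pos_of_mono_tendsto {F : ℝ → ℝ} {b : ℝ} (hb : 0 < b)
    (hm : StrictMonoOn F (Ioo 0 b)) (hl : Tendsto F (nhdsWithin 0 (Ioi 0)) (nhds 0)) :
    ∀ x ∈ Ioo 0 b, 0 < F x := by
  intro x hx
  have hx2 : x/2 ∈ Ioo 0 b := ⟨by linarith [hx.1], by linarith [hx.2, hx.1]⟩
  have h1 : F (x/2) < F x := hm hx2 hx (by linarith [hx.1])
  have h2 : 0 ≤ F (x/2) := by
    apply le_of_tendsto hl
    have hmem : (0:ℝ) ∈ Ico (0:ℝ) (x/2) := ⟨le_refl 0, by linarith [hx.1]⟩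
    filter_upwards [Ioo_mem_nhdsGT_of_mem hmem] with t ht
    exact (hm ⟨ht.1, by linarith [ht.2, hx.2]⟩ hx2 ht.2).le
  linarith

lemma mono_PH : StrictMonoOn PH (Ioo 0 (π/2)) := by
  apply strictMonoOn_of_deriv_pos (convex_Ioo 0 (π/2))
  · intro y hy
    exact (hasDerivAt_PH hy.1 (sin_pos hy.1 hy.2) (A_pos hy.1 hy.2)).continuousAt.continuousWithinAt
  · intro y hy
    rw [interior_Ioo] at hy
    rw [(hasDerivAt_PH hy.1 (sin_pos hy.1 hy.2) (A_pos hy.1 hy.2)).deriv]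
    exact deriv_PH_pos hy.1 hy.2

lemma mono_GG : StrictMonoOn GG (Ioo 0 (π/2)) := by
  apply strictMonoOn_of_deriv_pos (convex_Ioo 0 (π/2))
  · intro y hy
    exact (hasDerivAt_GG hy.1 (sin_pos hy.1 hy.2)).continuousAt.continuousWithinAt
  · intro y hy
    rw [interior_Ioo] at hy
    rw [(hasDerivAt_GG hy.1 (sin_pos hy.1 hy.2)).deriv]
    have hs := sin_pos hy.1 hy.2
    have := Real.sin_lt hy.1
    apply div_pos (by nlinarith) (mul_pos hy.1 (pow_pos hs 2))



lemma FF_lb {x : ℝ} (h0 : 0 < x) (hx : x ≤ 1) : x^2/6 - x^4/120 ≤ FF x := by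
  have hs : 0 < sin x := sin_pos h0 (by nlinarith [Real.pi_gt_three])
  have h5 := sin_le_5 h0.le
  have hlog : log (sin x / x) ≤ sin x / x - 1 := Real.log_le_sub_one_of_pos (by positivity)
  have h1 : sin x / x ≤ 1 - x^2/6 + x^4/120 := by
    rw [div_le_iff₀ h0]; nlinarith
  have h2 : FF x = - log (sin x / x) := by
    rw [FF, ← Real.log_inv]; congr 1; field_simp
  rw [h2]; linarith

lemma FF_ub {x : ℝ} (h0 : 0 < x) (hx : x ≤ 1) : FF x ≤ x^2/6 + x^4 := by
  have hs : 0 < sin x := sin_pos h0 (by nlinarith [Real.pi_gt_three])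
  have h3 := sin_ge_3 h0.le
  have hlog : log (x / sin x) ≤ x / sin x - 1 := Real.log_le_sub_one_of_pos (by positivity)
  have hx2 : x^2 ≤ 1 := by nlinarith
  have h1 : x / sin x - 1 ≤ x^2/6 + x^4 := by
    rw [div_sub_one hs.ne', div_le_iff₀ hs]
    nlinarith [mul_le_mul_of_nonneg_left h3 (show (0:ℝ) ≤ x^2/6 + x^4 by positivity),
      mul_le_mul_of_nonneg_left hx2 (show (0:ℝ) ≤ x^5 by positivity), pow_pos h0 5]
  exact le_trans hlog h1

lemma FF_nonneg {x : ℝ} (h0 : 0 < x) (hx : x < π/2) : 0 ≤ FF x := by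
  have hs := sin_pos h0 hx
  exact Real.log_nonneg ((one_le_div hs).2 (Real.sin_lt h0).le)

lemma u_eq {x : ℝ} (hs : sin x ≠ 0) :
    1 - x * (cos x / sin x) = (sin x - x * cos x) / sin x := by field_simp

lemma GG_lb {x : ℝ} (h0 : 0 < x) (hx : x ≤ 1) : x^2/6 - 2*x^4 ≤ GG x := by
  have hpi : x < π/2 := by nlinarith [Real.pi_gt_three]
  have hs : 0 < sin x := sin_pos h0 hpi
  have hB := B_pos h0 hpi
  have hslt := Real.sin_lt h0
  have hBlb : x^3/3 - x^5/30 - x^7/5040 ≤ sin x - x * cos x := by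
    have h1 := sin_ge_7 h0.le
    have h2 := cos_le_4 h0.le
    nlinarith [h2, mul_le_mul_of_nonneg_left h2 h0.le]
  have hu : x^2/3 - x^4/30 - x^6/5040 ≤ 1 - x * (cos x / sin x) := by
    rw [u_eq hs.ne']
    have h1 : (sin x - x * cos x) / x ≤ (sin x - x * cos x) / sin x :=
      div_le_div_of_nonneg_left hB.le hs hslt.le
    have h2 : x^2/3 - x^4/30 - x^6/5040 ≤ (sin x - x * cos x) / x := by
      rw [le_div_iff₀ h0]; nlinarith
    linarith [h1, h2]
  have hf := FF_ub h0 hx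
  have : GG x = (1 - x * (cos x / sin x)) - FF x := by rw [GG, FF]
  rw [this]
  nlinarith [sq_nonneg x, sq_nonneg (x^2), pow_le_pow_left₀ h0.le hx 6, pow_le_pow_left₀ h0.le hx 4]

lemma GG_ub {x : ℝ} (h0 : 0 < x) (hx : x ≤ 1) : GG x ≤ x^2/6 + 2*x^4 := by
  have hpi : x < π/2 := by nlinarith [Real.pi_gt_three]
  have hs : 0 < sin x := sin_pos h0 hpi
  have hB := B_pos h0 hpi
  have h3 := sin_ge_3 h0.le
  have hx2 : x^2 ≤ 1 := by nlinarith
  have hsl : 0 < x - x^3/6 := by nlinarith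
  have hu : 1 - x * (cos x / sin x) ≤ x^2/3 + x^4 := by
    rw [u_eq hs.ne']
    have h1 : (sin x - x * cos x) / sin x ≤ (x^3/3) / (x - x^3/6) :=
      div_le_div₀ (by positivity) (B_le_cube h0.le) hsl h3
    have h2 : (x^3/3) / (x - x^3/6) ≤ x^2/3 + x^4 := by
      rw [div_le_iff₀ hsl]
      nlinarith [mul_le_mul_of_nonneg_left hx2 (show (0:ℝ) ≤ x^5 by positivity), pow_pos h0 5]
    linarith
  have hf := FF_lb h0 hx
  have : GG x = (1 - x * (cos x / sin x)) - FF x := by rw [GG, FF]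
  rw [this]
  nlinarith [hu, hf]



lemma PH_abs_bound {x : ℝ} (h0 : 0 < x) (hx : x ≤ 1) : -x^2 ≤ PH x ∧ PH x ≤ 2*x^2 := by
  have hpi : x < π/2 := by nlinarith [Real.pi_gt_three]
  have hA := A_pos h0 hpi
  have hB := B_pos h0 hpi
  have hAlb : 2*x^4/3 - 2*x^6/15 ≤ x^2 - x * (sin x * cos x) := by
    have h2 : sin (2*x) ≤ (2*x) - (2*x)^3/6 + (2*x)^5/120 - (2*x)^7/5040 + (2*x)^9/362880 :=
      sin_le_9 (by linarith)
    rw [Real.sin_two_mul] at h2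
    have hx2 : x^2 ≤ 1 := by nlinarith
    nlinarith [mul_le_mul_of_nonneg_left hx2 (show (0:ℝ) ≤ x^8 by positivity),
      mul_le_mul_of_nonneg_left hx2 (show (0:ℝ) ≤ x^6 by positivity), pow_pos h0 6, pow_pos h0 8]
  constructor
  · have hq : (sin x - x * cos x)^2 / (x^2 - x * (sin x * cos x)) ≤ x^2 := by
      rw [div_le_iff₀ hA]
      have h1 : (sin x - x * cos x)^2 ≤ (x^3/3)^2 := by
        nlinarith [B_le_cube h0.le, hB]
      have hx2 : x^2 ≤ 1 := by nlinarith
      nlinarith [mul_le_mul_of_nonneg_left hAlb (sq_nonneg x),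
        mul_le_mul_of_nonneg_left hx2 (show (0:ℝ) ≤ x^6 by positivity), pow_pos h0 6]
    have := FF_nonneg h0 hpi
    have hPH : PH x = FF x - (sin x - x * cos x)^2 / (x^2 - x * (sin x * cos x)) := rfl
    rw [hPH]
    linarith [hq, this]
  · have hq : 0 ≤ (sin x - x * cos x)^2 / (x^2 - x * (sin x * cos x)) := by positivity
    have := FF_ub h0 hx
    have hPH : PH x = FF x - (sin x - x * cos x)^2 / (x^2 - x * (sin x * cos x)) := rfl
    rw [hPH]
    have hx2 : x^2 ≤ 1 := by nlinarith
    have h4 : x^4 ≤ x^2 := by nlinarith [sq_nonneg x]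
    linarith [sq_nonneg x]

lemma tendsto_PH_zero : Tendsto PH (nhdsWithin 0 (Ioi 0)) (nhds 0) := by
  have hg : Tendsto (fun x : ℝ => -x^2) (nhdsWithin 0 (Ioi 0)) (nhds 0) := by
    have : Tendsto (fun x : ℝ => -x^2) (nhds 0) (nhds (-(0:ℝ)^2)) :=
      ((continuous_pow 2).neg).tendsto 0
    simpa using this.mono_left nhdsWithin_le_nhds
  have hh : Tendsto (fun x : ℝ => 2*x^2) (nhdsWithin 0 (Ioi 0)) (nhds 0) := by
    have : Continuous (fun x : ℝ => 2*x^2) := by continuity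
    have h2 := this.tendsto 0
    simpa using h2.mono_left nhdsWithin_le_nhds
  apply tendsto_of_tendsto_of_tendsto_of_le_of_le' hg hh
  · filter_upwards [Ioo_mem_nhdsGT_of_mem (show (0:ℝ) ∈ Ico (0:ℝ) 1 by constructor <;> norm_num)]
      with t ht
    exact (PH_abs_bound ht.1 ht.2.le).1
  · filter_upwards [Ioo_mem_nhdsGT_of_mem (show (0:ℝ) ∈ Ico (0:ℝ) 1 by constructor <;> norm_num)]
      with t ht
    exact (PH_abs_bound ht.1 ht.2.le).2

lemma tendsto_FF_div_sq : Tendsto (fun x => FF x / x^2) (nhdsWithin 0 (Ioi 0)) (nhds (1/6)) := by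
  have hg : Tendsto (fun x : ℝ => 1/6 - x^2/120) (nhdsWithin 0 (Ioi 0)) (nhds (1/6)) := by
    have : Continuous (fun x : ℝ => 1/6 - x^2/120) := by continuity
    have h := this.tendsto 0
    simpa using h.mono_left nhdsWithin_le_nhds
  have hh : Tendsto (fun x : ℝ => 1/6 + x^2) (nhdsWithin 0 (Ioi 0)) (nhds (1/6)) := by
    have : Continuous (fun x : ℝ => 1/6 + x^2) := by continuity
    have h := this.tendsto 0
    simpa using h.mono_left nhdsWithin_le_nhds
  apply tendsto_of_tendsto_of_tendsto_of_le_of_le' hg hh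
  · filter_upwards [Ioo_mem_nhdsGT_of_mem (show (0:ℝ) ∈ Ico (0:ℝ) 1 by constructor <;> norm_num)]
      with t ht
    rw [le_div_iff₀ (pow_pos ht.1 2)]
    calc (1/6 - t^2/120) * t^2 = t^2/6 - t^4/120 := by ring
    _ ≤ FF t := FF_lb ht.1 ht.2.le
  · filter_upwards [Ioo_mem_nhdsGT_of_mem (show (0:ℝ) ∈ Ico (0:ℝ) 1 by constructor <;> norm_num)]
      with t ht
    rw [div_le_iff₀ (pow_pos ht.1 2)]
    calc FF t ≤ t^2/6 + t^4 := FF_ub ht.1 ht.2.le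
    _ ≤ (1/6 + t^2) * t^2 := by nlinarith [sq_nonneg t]

lemma tendsto_GG_div_sq : Tendsto (fun x => GG x / x^2) (nhdsWithin 0 (Ioi 0)) (nhds (1/6)) := by
  have hg : Tendsto (fun x : ℝ => 1/6 - 2*x^2) (nhdsWithin 0 (Ioi 0)) (nhds (1/6)) := by
    have : Continuous (fun x : ℝ => 1/6 - 2*x^2) := by continuity
    have h := this.tendsto 0
    simpa using h.mono_left nhdsWithin_le_nhds
  have hh : Tendsto (fun x : ℝ => 1/6 + 2*x^2) (nhdsWithin 0 (Ioi 0)) (nhds (1/6)) := by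
    have : Continuous (fun x : ℝ => 1/6 + 2*x^2) := by continuity
    have h := this.tendsto 0
    simpa using h.mono_left nhdsWithin_le_nhds
  apply tendsto_of_tendsto_of_tendsto_of_le_of_le' hg hh
  · filter_upwards [Ioo_mem_nhdsGT_of_mem (show (0:ℝ) ∈ Ico (0:ℝ) 1 by constructor <;> norm_num)]
      with t ht
    rw [le_div_iff₀ (pow_pos ht.1 2)]
    calc (1/6 - 2*t^2) * t^2 = t^2/6 - 2*t^4 := by ring
    _ ≤ GG t := GG_lb ht.1 ht.2.le
  · filter_upwards [Ioo_mem_nhdsGT_of_mem (show (0:ℝ) ∈ Ico (0:ℝ) 1 by constructor <;> norm_num)]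
      with t ht
    rw [div_le_iff₀ (pow_pos ht.1 2)]
    calc GG t ≤ t^2/6 + 2*t^4 := GG_ub ht.1 ht.2.le
    _ ≤ (1/6 + 2*t^2) * t^2 := by nlinarith [sq_nonneg t]

lemma tendsto_ratio_one : Tendsto (fun x => FF x / GG x) (nhdsWithin 0 (Ioi 0)) (nhds 1) := by
  have h := tendsto_FF_div_sq.div tendsto_GG_div_sq (by norm_num)
  have h1 : ((1:ℝ)/6) / ((1:ℝ)/6) = 1 := by norm_num
  rw [h1] at h
  apply h.congr'
  filter_upwards [Ioo_mem_nhdsGT_of_mem (show (0:ℝ) ∈ Ico (0:ℝ) (1/4) by constructor <;> norm_num)]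
    with t ht
  have h0 := ht.1
  have hGG : 0 < GG t := by
    have := GG_lb ht.1 (by linarith [ht.2])
    nlinarith [this, mul_pos (pow_pos h0 2)
      (show (0:ℝ) < 1/6 - 2*t^2 by nlinarith [ht.2, h0])]
  rw [Pi.div_apply]
  field_simp



lemma tendsto_GG_zero : Tendsto GG (nhdsWithin 0 (Ioi 0)) (nhds 0) := by
  have hg : Tendsto (fun x : ℝ => x^2/6 - 2*x^4) (nhdsWithin 0 (Ioi 0)) (nhds 0) := by
    have hc : Continuous (fun x : ℝ => x^2/6 - 2*x^4) := by continuity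
    have h := hc.tendsto 0
    simpa using h.mono_left nhdsWithin_le_nhds
  have hh : Tendsto (fun x : ℝ => x^2/6 + 2*x^4) (nhdsWithin 0 (Ioi 0)) (nhds 0) := by
    have hc : Continuous (fun x : ℝ => x^2/6 + 2*x^4) := by continuity
    have h := hc.tendsto 0
    simpa using h.mono_left nhdsWithin_le_nhds
  apply tendsto_of_tendsto_of_tendsto_of_le_of_le' hg hh
  · filter_upwards [Ioo_mem_nhdsGT_of_mem (show (0:ℝ) ∈ Ico (0:ℝ) 1 by constructor <;> norm_num)]
      with t ht
    exact GG_lb ht.1 ht.2.le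
  · filter_upwards [Ioo_mem_nhdsGT_of_mem (show (0:ℝ) ∈ Ico (0:ℝ) 1 by constructor <;> norm_num)]
      with t ht
    exact GG_ub ht.1 ht.2.le

lemma PH_pos : ∀ x ∈ Ioo 0 (π/2), 0 < PH x :=
  pos_of_mono_tendsto (by positivity) mono_PH tendsto_PH_zero

lemma GG_pos : ∀ x ∈ Ioo 0 (π/2), 0 < GG x :=
  pos_of_mono_tendsto (by positivity) mono_GG tendsto_GG_zero


lemma FF_pi2 : FF (π/2) = log (π/2) := by
  rw [FF, Real.sin_pi_div_two, div_one]

lemma GG_pi2 : GG (π/2) = 1 - log (π/2) := by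
  rw [GG, Real.sin_pi_div_two, Real.cos_pi_div_two, div_one]
  norm_num

lemma log_pi2_lt_one : log (π/2) < 1 := by
  have h := Real.log_le_sub_one_of_pos (show (0:ℝ) < π/2 by positivity)
  nlinarith [Real.pi_lt_d2]

lemma log_pi2_pos : 0 < log (π/2) := by
  apply Real.log_pos; nlinarith [Real.pi_gt_three]

lemma L_eq : log (2 * exp 1 / π) = 1 - log (π/2) := by
  rw [Real.log_div (by positivity) Real.pi_ne_zero,
    Real.log_mul (by norm_num) (Real.exp_ne_zero 1), Real.log_exp,
    Real.log_div Real.pi_ne_zero (by norm_num)]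
  ring

lemma GG_pi2_pos : 0 < GG (π/2) := by
  rw [GG_pi2]; linarith [log_pi2_lt_one]

lemma tendsto_ratio_L :
    Tendsto (fun x => FF x / GG x) (nhdsWithin (π/2) (Iio (π/2)))
      (nhds (log (π/2) / log (2 * exp 1 / π))) := by
  have h0 : (0:ℝ) < π/2 := by positivity
  have hs : (0:ℝ) < sin (π/2) := by rw [Real.sin_pi_div_two]; norm_num
  have hcont : ContinuousAt (fun x => FF x / GG x) (π/2) :=
    ((hasDerivAt_FF h0 hs).continuousAt.div (hasDerivAt_GG h0 hs).continuousAt GG_pi2_pos.ne')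
  have h : Tendsto (fun x => FF x / GG x) (nhdsWithin (π/2) (Iio (π/2)))
      (nhds (FF (π/2) / GG (π/2))) := hcont.tendsto.mono_left nhdsWithin_le_nhds
  have hval : FF (π/2) / GG (π/2) = log (π/2) / log (2 * exp 1 / π) := by
    rw [FF_pi2, GG_pi2, L_eq]
  rwa [hval] at h

lemma ratio_cont : ContinuousOn (fun x => FF x / GG x) (Ioo 0 (π/2)) := by
  intro x hx
  exact (((hasDerivAt_FF hx.1 (sin_pos hx.1 hx.2)).continuousAt.div
    (hasDerivAt_GG hx.1 (sin_pos hx.1 hx.2)).continuousAt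
    (GG_pos x hx).ne')).continuousWithinAt

lemma ratio_anti : StrictAntiOn (fun x => FF x / GG x) (Ioo 0 (π/2)) := by
  apply strictAntiOn_of_deriv_neg (convex_Ioo 0 (π/2)) ratio_cont
  intro x hx
  rw [interior_Ioo] at hx
  have h0 := hx.1
  have hs := sin_pos hx.1 hx.2
  have hA := A_pos hx.1 hx.2
  have hGG := GG_pos x hx
  have hD := (hasDerivAt_FF h0 hs).div (hasDerivAt_GG h0 hs) hGG.ne'
  rw [show (fun x => FF x / GG x) = FF / GG from rfl, hD.deriv]
  apply div_neg_of_neg_of_pos _ (by positivity)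
  have hGGdef : GG x = 1 - x * (cos x / sin x) - FF x := rfl
  have hNid : (sin x - x * cos x) / (x * sin x) * GG x
      - FF x * ((x^2 - (sin x)^2) / (x * (sin x)^2))
      = ((sin x - x * cos x)^2 - (x^2 - x * (sin x * cos x)) * FF x) / (x * (sin x)^2) := by
    rw [hGGdef]; field_simp; ring
  rw [hNid]
  apply div_neg_of_neg_of_pos _ (by positivity)
  have hPH := PH_pos x hx
  have hPHdef : PH x = FF x - (sin x - x * cos x)^2 / (x^2 - x * (sin x * cos x)) := rfl
  rw [hPHdef] at hPH
  have h2 : (sin x - x * cos x)^2 / (x^2 - x * (sin x * cos x)) < FF x := by linarith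
  rw [div_lt_iff₀ hA] at h2
  nlinarith [h2]

lemma ratio_lt_one : ∀ x ∈ Ioo 0 (π/2), FF x / GG x < 1 := by
  intro x hx
  have h2 : x/2 ∈ Ioo 0 (π/2) := ⟨by linarith [hx.1], by linarith [hx.1, hx.2]⟩
  have hlt : FF x / GG x < FF (x/2) / GG (x/2) := ratio_anti h2 hx (by linarith [hx.1])
  have hle : FF (x/2) / GG (x/2) ≤ 1 := by
    apply ge_of_tendsto tendsto_ratio_one
    have hmem : (0:ℝ) ∈ Ico (0:ℝ) (x/2) := ⟨le_refl 0, by linarith [hx.1]⟩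
    filter_upwards [Ioo_mem_nhdsGT_of_mem hmem] with t ht
    exact (ratio_anti ⟨ht.1, by linarith [ht.2, hx.2, hx.1]⟩ h2 ht.2).le
  linarith

lemma ratio_gt_L : ∀ x ∈ Ioo 0 (π/2),
    log (π/2) / log (2 * exp 1 / π) < FF x / GG x := by
  intro x hx
  have hm : (x + π/2)/2 ∈ Ioo 0 (π/2) := ⟨by linarith [hx.1, hx.2], by linarith [hx.2]⟩
  have hxm : x < (x + π/2)/2 := by linarith [hx.2]
  have hlt : FF ((x + π/2)/2) / GG ((x + π/2)/2) < FF x / GG x := ratio_anti hx hm hxm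
  have hge : log (π/2) / log (2 * exp 1 / π) ≤ FF ((x + π/2)/2) / GG ((x + π/2)/2) := by
    apply le_of_tendsto tendsto_ratio_L
    have hmem : (π/2 : ℝ) ∈ Ioc ((x + π/2)/2) (π/2) := ⟨hm.2, le_refl _⟩
    filter_upwards [Ioo_mem_nhdsLT_of_mem hmem] with t ht
    exact (ratio_anti hm ⟨by linarith [ht.1, hm.1], ht.2⟩ ht.1).le
  linarith

lemma ratio_image : (fun x => FF x / GG x) '' Ioo 0 (π/2)
    = Ioo (log (π/2) / log (2 * exp 1 / π)) 1 := by
  apply Subset.antisymm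
  · rintro y ⟨x, hx, rfl⟩
    exact ⟨ratio_gt_L x hx, ratio_lt_one x hx⟩
  · intro y hy
    -- find a near 0 with ratio > y
    have hev1 : ∀ᶠ t in nhdsWithin 0 (Ioi (0:ℝ)), y < FF t / GG t :=
      tendsto_ratio_one.eventually (eventually_gt_nhds hy.2)
    have hev1' : ∀ᶠ t in nhdsWithin 0 (Ioi (0:ℝ)), t ∈ Ioo 0 (π/2) := by
      have hmem : (0:ℝ) ∈ Ico (0:ℝ) (π/2) := ⟨le_refl 0, by positivity⟩
      filter_upwards [Ioo_mem_nhdsGT_of_mem hmem] with t ht; exact ht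
    obtain ⟨a, hay, ha⟩ := (hev1.and hev1').exists
    -- find b near π/2 with ratio < y and a < b
    have hev2 : ∀ᶠ t in nhdsWithin (π/2) (Iio (π/2 : ℝ)), FF t / GG t < y :=
      tendsto_ratio_L.eventually (eventually_lt_nhds hy.1)
    have hev2' : ∀ᶠ t in nhdsWithin (π/2) (Iio (π/2 : ℝ)), t ∈ Ioo a (π/2) := by
      have hmem : (π/2 : ℝ) ∈ Ioc a (π/2) := ⟨ha.2, le_refl _⟩
      filter_upwards [Ioo_mem_nhdsLT_of_mem hmem] with t ht; exact ht
    obtain ⟨b, hby, hb⟩ := (hev2.and hev2').exists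
    have hab : a ≤ b := hb.1.le
    have hIcc : Icc a b ⊆ Ioo 0 (π/2) := fun t ht => ⟨lt_of_lt_of_le ha.1 ht.1,
      lt_of_le_of_lt ht.2 hb.2⟩
    have hivt := intermediate_value_Icc' hab (ratio_cont.mono hIcc)
    have hy2 : y ∈ Icc (FF b / GG b) (FF a / GG a) := ⟨hby.le, hay.le⟩
    obtain ⟨x, hxmem, hxy⟩ := hivt hy2
    exact ⟨x, hIcc hxmem, hxy⟩


theorem sandor_lemma5 :
    StrictAntiOn (fun x : ℝ =>
        log (x / sin x) / log (exp (1 - x * (cos x / sin x)) * sin x / x))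
      (Ioo 0 (π/2)) ∧
    (fun x : ℝ =>
        log (x / sin x) / log (exp (1 - x * (cos x / sin x)) * sin x / x)) '' Ioo 0 (π/2) =
      Ioo (log (π/2) / log (2 * exp 1 / π)) 1 := by
  have hid : ∀ x ∈ Ioo 0 (π/2),
      log (x / sin x) / log (exp (1 - x * (cos x / sin x)) * sin x / x) = FF x / GG x := by
    intro x hx
    have h0 := hx.1
    have hs := sin_pos hx.1 hx.2
    have hden : log (exp (1 - x * (cos x / sin x)) * sin x / x) = GG x := by
      rw [Real.log_div (mul_ne_zero (Real.exp_ne_zero _) hs.ne') h0.ne',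
        Real.log_mul (Real.exp_ne_zero _) hs.ne', Real.log_exp]
      rw [show GG x = 1 - x * (cos x / sin x) - log (x / sin x) from rfl,
        Real.log_div h0.ne' hs.ne']
      ring
    rw [hden]
    rfl
  constructor
  · intro a ha b hb hab
    have h := ratio_anti ha hb hab
    simpa only [hid a ha, hid b hb] using h
  · rw [Set.image_congr hid, ratio_image]
end

section
/- For all a, b > 0 with a ≠ b, √(A·X) < P < (A·X^{β})^{1/(1+β)} where β = log(π/2)/log(2e/π), A = (a+b)/2, P = (a-b)/(2·arcsin((a-b)/(a+b))), and X = A·e^{G/P-1} with G = √(ab). -/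
open Real Set Filter Topology

noncomputable def A (a b : ℝ) : ℝ := (a + b) / 2
noncomputable def G (a b : ℝ) : ℝ := Real.sqrt (a * b)
noncomputable def P (a b : ℝ) : ℝ := (a - b) / (2 * Real.arcsin ((a - b) / (a + b)))
noncomputable def X (a b : ℝ) : ℝ := A a b * Real.exp (G a b / P a b - 1)


private lemma nonneg_of_deriv {f f' : ℝ → ℝ} (hf : ∀ x, HasDerivAt f (f' x) x)
    (h0 : f 0 = 0) (hd : ∀ x, 0 < x → 0 ≤ f' x) : ∀ t, 0 ≤ t → 0 ≤ f t := by
  intro t ht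
  have hdiff : Differentiable ℝ f := fun x => (hf x).differentiableAt
  have hmono : MonotoneOn f (Ici 0) := by
    apply monotoneOn_of_deriv_nonneg (convex_Ici 0) hdiff.continuous.continuousOn
      (hdiff.differentiableOn)
    intro x hx
    rw [interior_Ici] at hx
    rw [(hf x).deriv]
    exact hd x hx
  have := hmono (self_mem_Ici) (mem_Ici.2 ht) ht
  rwa [h0] at this

private lemma sin_ge_t3 {t : ℝ} (ht : 0 ≤ t) : t - t^3/6 ≤ sin t := by
  have := nonneg_of_deriv (f := fun t => sin t - (t - t^3/6))
    (f' := fun t => cos t - (1 - t^2/2)) (fun x => by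
      have h1 : HasDerivAt (fun t : ℝ => t - t^3/6) (1 - x^2/2) x := by
        have := ((hasDerivAt_pow 3 x).div_const 6)
        have h2 := (hasDerivAt_id x).sub this
        exact h2.congr_deriv (by ring)
      exact (Real.hasDerivAt_sin x).sub h1)
    (by norm_num)
    (fun x hx => by
      have := Real.one_sub_sq_div_two_le_cos (x := x)
      nlinarith)
  linarith [this t ht]

private lemma cos_le_t4 {t : ℝ} (ht : 0 ≤ t) : cos t ≤ 1 - t^2/2 + t^4/24 := by
  have := nonneg_of_deriv (f := fun t => (1 - t^2/2 + t^4/24) - cos t)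
    (f' := fun t => (-t + t^3/6) + sin t) (fun x => by
      have h1 : HasDerivAt (fun t : ℝ => 1 - t^2/2 + t^4/24) (-x + x^3/6) x := by
        have h2 := (((hasDerivAt_pow 2 x).div_const 2))
        have h3 := (((hasDerivAt_pow 4 x).div_const 24))
        have := ((hasDerivAt_const x (1:ℝ)).sub h2).add h3
        exact this.congr_deriv (by push_cast; ring)
      have := h1.sub (Real.hasDerivAt_cos x)
      exact this.congr_deriv (by ring))
    (by norm_num)
    (fun x hx => by nlinarith [sin_ge_t3 hx.le])
  linarith [this t ht]

private lemma sin_le_t5 {t : ℝ} (ht : 0 ≤ t) : sin t ≤ t - t^3/6 + t^5/120 := by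
  have := nonneg_of_deriv (f := fun t => (t - t^3/6 + t^5/120) - sin t)
    (f' := fun t => (1 - t^2/2 + t^4/24) - cos t) (fun x => by
      have h1 : HasDerivAt (fun t : ℝ => t - t^3/6 + t^5/120) (1 - x^2/2 + x^4/24) x := by
        have h2 := ((hasDerivAt_pow 3 x).div_const 6)
        have h3 := ((hasDerivAt_pow 5 x).div_const 120)
        have := ((hasDerivAt_id x).sub h2).add h3
        exact this.congr_deriv (by push_cast; ring)
      exact h1.sub (Real.hasDerivAt_sin x))
    (by norm_num)
    (fun x hx => by nlinarith [cos_le_t4 hx.le])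
  linarith [this t ht]

private lemma cos_ge_t6 {t : ℝ} (ht : 0 ≤ t) : 1 - t^2/2 + t^4/24 - t^6/720 ≤ cos t := by
  have := nonneg_of_deriv (f := fun t => cos t - (1 - t^2/2 + t^4/24 - t^6/720))
    (f' := fun t => -sin t - (-t + t^3/6 - t^5/120)) (fun x => by
      have h1 : HasDerivAt (fun t : ℝ => 1 - t^2/2 + t^4/24 - t^6/720) (-x + x^3/6 - x^5/120) x := by
        have h2 := ((hasDerivAt_pow 2 x).div_const 2)
        have h3 := ((hasDerivAt_pow 4 x).div_const 24)
        have h4 := ((hasDerivAt_pow 6 x).div_const 720)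
        have := (((hasDerivAt_const x (1:ℝ)).sub h2).add h3).sub h4
        exact this.congr_deriv (by push_cast; ring)
      exact (Real.hasDerivAt_cos x).sub h1)
    (by norm_num)
    (fun x hx => by nlinarith [sin_le_t5 hx.le])
  linarith [this t ht]

private lemma sin_ge_t7 {t : ℝ} (ht : 0 ≤ t) : t - t^3/6 + t^5/120 - t^7/5040 ≤ sin t := by
  have := nonneg_of_deriv (f := fun t => sin t - (t - t^3/6 + t^5/120 - t^7/5040))
    (f' := fun t => cos t - (1 - t^2/2 + t^4/24 - t^6/720)) (fun x => by
      have h1 : HasDerivAt (fun t : ℝ => t - t^3/6 + t^5/120 - t^7/5040)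
          (1 - x^2/2 + x^4/24 - x^6/720) x := by
        have h2 := ((hasDerivAt_pow 3 x).div_const 6)
        have h3 := ((hasDerivAt_pow 5 x).div_const 120)
        have h4 := ((hasDerivAt_pow 7 x).div_const 5040)
        have := (((hasDerivAt_id x).sub h2).add h3).sub h4
        exact this.congr_deriv (by push_cast; ring)
      exact (Real.hasDerivAt_sin x).sub h1)
    (by norm_num)
    (fun x hx => by nlinarith [cos_ge_t6 hx.le])
  linarith [this t ht]
private lemma pi_half_lt : (π/2 : ℝ) < 1.5708 := by
  have := Real.pi_lt_d6; linarith

private lemma Rpos {x : ℝ} (h0 : 0 ≤ x) (h1 : x ≤ 2.4675) :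
    0 < 1/90 - 17*x/5040 + 41*x^2/302400 - x^3/302400 + x^4/25401600 := by
  nlinarith [sq_nonneg x, mul_nonneg h0 (sub_nonneg.2 h1), sq_nonneg (x - 2.4675),
    mul_nonneg (mul_nonneg h0 h0) (sub_nonneg.2 h1), sq_nonneg (x*(x-2.4675))]

private lemma sl7_nonneg {t : ℝ} (h0 : 0 ≤ t) (h1 : t ≤ 1.5708) :
    0 ≤ t - t^3/6 + t^5/120 - t^7/5040 := by
  nlinarith [pow_le_pow_left₀ h0 h1 2, sq_nonneg t, sq_nonneg (t^2), sq_nonneg (t^3)]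

private lemma K1 {t : ℝ} (ht : 0 < t) (ht2 : t < π/2) :
    t^2*(1 + cos t) < sin t * (sin t + t) := by
  have h158 : t < 1.5708 := ht2.trans pi_half_lt
  have h2468 : t^2 ≤ 2.4675 := by nlinarith
  have hsl := sin_ge_t7 ht.le
  have hcu := cos_le_t4 ht.le
  have hsl0 := sl7_nonneg ht.le h158.le
  have hs2 : (t - t^3/6 + t^5/120 - t^7/5040)^2 ≤ sin t ^ 2 := by
    nlinarith [mul_self_le_mul_self hsl0 hsl]
  have hR := Rpos (sq_nonneg t) h2468
  have hK : 0 < (t - t^3/6 + t^5/120 - t^7/5040)*((t - t^3/6 + t^5/120 - t^7/5040)+t)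
      - t^2*(1+(1 - t^2/2 + t^4/24)) := by
    nlinarith [mul_pos (pow_pos ht 6) hR]
  nlinarith [hK, hs2, mul_le_mul_of_nonneg_right hsl ht.le,
    mul_le_mul_of_nonneg_left hcu (sq_nonneg t)]

private lemma R2a {x : ℝ} (h0 : 0 ≤ x) (h1 : x ≤ 2.4675) :
    -13/225 + 53*x/2520 - 2819*x^2/1209600 + 271*x^3/3024000 - x^4/6350400 < 0 := by
  nlinarith [mul_nonneg (mul_nonneg h0 h0) (sub_nonneg.2 h1), sq_nonneg x, pow_nonneg h0 4]

private lemma R2b {x : ℝ} (h0 : 0 ≤ x) (h1 : x ≤ 2.4675) :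
    -257/4500 + 117*x/5600 - 56107*x^2/24192000 + 5399*x^3/60480000 - x^4/6350400 < 0 := by
  nlinarith [mul_nonneg (mul_nonneg h0 h0) (sub_nonneg.2 h1), sq_nonneg x, pow_nonneg h0 4]

set_option maxHeartbeats 1000000 in
private lemma Elem {t l : ℝ} (ht : 0 < t) (ht2 : t < π/2) (hl : l = 9/20 ∨ l = 181/400) :
    (5-3*l)*(t*sin t*cos t) - (1-l)*t^2*((cos t)^2 - (sin t)^2) + 2*l*t^2 - 4*(sin t)^2 < 0 := by
  have h158 : t < 1.5708 := ht2.trans pi_half_lt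
  have hx : t^2 ≤ 2.4675 := by nlinarith
  have hs0 : 0 ≤ sin t := sin_nonneg_of_nonneg_of_le_pi ht.le (by nlinarith [pi_gt_d6])
  have hc0 : 0 ≤ cos t := cos_nonneg_of_mem_Icc ⟨by linarith [ht], ht2.le⟩
  have hsu := sin_le_t5 ht.le
  have hsl := sin_ge_t7 ht.le
  have hcu := cos_le_t4 ht.le
  have hsu0 : 0 ≤ t - t^3/6 + t^5/120 := le_trans hs0 hsu
  have hpy : (cos t)^2 = 1 - (sin t)^2 := by
    have := sin_sq_add_cos_sq t; linarith
  have hsc : sin t * cos t ≤ (t - t^3/6 + t^5/120) * (1 - t^2/2 + t^4/24) :=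
    mul_le_mul hsu hcu hc0 hsu0
  have h1 : t * (sin t * cos t) ≤ t * ((t - t^3/6 + t^5/120) * (1 - t^2/2 + t^4/24)) :=
    mul_le_mul_of_nonneg_left hsc ht.le
  have hs2u : (sin t)^2 ≤ (t - t^3/6 + t^5/120)^2 := by
    nlinarith [mul_self_le_mul_self hs0 hsu]
  have h2 : t^2 * (sin t)^2 ≤ t^2 * (t - t^3/6 + t^5/120)^2 :=
    mul_le_mul_of_nonneg_left hs2u (sq_nonneg t)
  have h3 : (t - t^3/6 + t^5/120 - t^7/5040)^2 ≤ (sin t)^2 := by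
    nlinarith [mul_self_le_mul_self (sl7_nonneg ht.le h158.le) hsl]
  rw [hpy]
  rcases hl with rfl | rfl
  · have hR2 := R2a (sq_nonneg t) hx
    have hR : (0:ℝ) < t^6 * (-(-13/225 + 53*t^2/2520 - 2819*(t^2)^2/1209600
        + 271*(t^2)^3/3024000 - (t^2)^4/6350400)) :=
      mul_pos (pow_pos ht 6) (by linarith)
    linarith [hR, h1, h2, h3]
  · have hR2 := R2b (sq_nonneg t) hx
    have hR : (0:ℝ) < t^6 * (-(-257/4500 + 117*t^2/5600 - 56107*(t^2)^2/24192000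
        + 5399*(t^2)^3/60480000 - (t^2)^4/6350400)) :=
      mul_pos (pow_pos ht 6) (by linarith)
    linarith [hR, h1, h2, h3]

private lemma log_gt_half {x : ℝ} (h0 : 0 < x) (h1 : x < 1) : (x - 1/x)/2 < log x := by
  set f : ℝ → ℝ := fun x => 2*log x - x + 1/x with hf
  have hanti : StrictAntiOn f (Ioc 0 1) := by
    apply strictAntiOn_of_deriv_neg (convex_Ioc 0 1)
    · apply ContinuousOn.add
      · apply ContinuousOn.sub _ continuousOn_id
        exact (Real.continuousOn_log.mono (fun y (hy : y ∈ Ioc (0:ℝ) 1) =>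
          ne_of_gt hy.1)).const_smul 2 |>.congr (fun y _ => by simp [smul_eq_mul])
      · exact continuousOn_const.div continuousOn_id
          (fun y (hy : y ∈ Ioc (0:ℝ) 1) => ne_of_gt hy.1)
    · intro y hy
      rw [interior_Ioc] at hy
      have hy0 : y ≠ 0 := ne_of_gt hy.1
      have hd : HasDerivAt f (2*y⁻¹ - 1 + (-(1/y^2))) y := by
        have h1 : HasDerivAt (fun x : ℝ => 2 * log x) (2*y⁻¹) y :=
          (Real.hasDerivAt_log hy0).const_mul 2
        have h2 : HasDerivAt (fun x : ℝ => 1/x) (-(1/y^2)) y := by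
          simpa [one_div] using (hasDerivAt_inv hy0)
        exact (h1.sub (hasDerivAt_id y)).add h2
      rw [hd.deriv]
      have heq : 2*y⁻¹ - 1 + (-(1/y^2)) = -((y-1)^2/y^2) := by field_simp; ring
      rw [heq]
      have : (0:ℝ) < (y-1)^2/y^2 :=
        div_pos (by nlinarith [hy.2] : (0:ℝ) < (y-1)^2) (by positivity)
      linarith
  have := hanti (mem_Ioc.2 ⟨h0, h1.le⟩) (mem_Ioc.2 ⟨one_pos, le_refl 1⟩) h1
  simp only [hf, log_one] at this
  have hx : 1/x > 0 := by positivity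
  nlinarith [this]

private lemma exp_upper : exp (9/20 : ℝ) < 1.570796 := by
  have h1 : exp (-(9/20)/256 : ℝ) ≥ 1 - (9/20)/256 := by
    have := Real.add_one_le_exp (-(9/20)/256 : ℝ); linarith
  have h2 : exp (-(9/20) : ℝ) ≥ (1 - (9/20)/256)^(256:ℕ) := by
    have : exp (-(9/20) : ℝ) = exp (-(9/20)/256) ^ (256:ℕ) := by
      rw [← Real.exp_nat_mul]; norm_num
    rw [this]
    exact pow_le_pow_left₀ (by norm_num) h1 256
  have h3 : ((1 - (9/20)/256 : ℝ))^(256:ℕ) > 1/1.570796 := by norm_num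
  have h4 : exp (-(9/20) : ℝ) > 1/1.570796 := lt_of_lt_of_le h3 h2
  have h5 : exp (-(9/20) : ℝ) * exp (9/20 : ℝ) = 1 := by
    rw [← Real.exp_add]; norm_num
  nlinarith [exp_pos (9/20 : ℝ)]

private lemma exp_lower : (1.5707965 : ℝ) < exp (181/400 : ℝ) := by
  have h1 : (1 + (181/400)/256 : ℝ) ≤ exp ((181/400)/256) := by
    have := Real.add_one_le_exp ((181/400)/256 : ℝ); linarith
  have h2 : ((1 + (181/400)/256 : ℝ))^(256:ℕ) ≤ exp (181/400 : ℝ) := by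
    have he : exp (181/400 : ℝ) = exp ((181/400)/256) ^ (256:ℕ) := by
      rw [← Real.exp_nat_mul]; norm_num
    rw [he]
    exact pow_le_pow_left₀ (by norm_num) h1 256
  have h3 : (1.5707965 : ℝ) < ((1 + (181/400)/256 : ℝ))^(256:ℕ) := by norm_num
  linarith

private lemma L_lb : (9/20 : ℝ) < log (π/2) := by
  have hpi : (1.570796 : ℝ) < π/2 := by have := pi_gt_d6; linarith
  have : exp (9/20 : ℝ) < π/2 := lt_trans exp_upper hpi
  have := Real.lt_log_iff_exp_lt (by linarith [pi_pos] : (0:ℝ) < π/2) |>.mpr this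
  exact this

private lemma L_ub : log (π/2) < (181/400 : ℝ) := by
  have hpi : π/2 < (1.5707965 : ℝ) := by have := pi_lt_d6; linarith
  have : π/2 < exp (181/400 : ℝ) := lt_trans hpi exp_lower
  exact (Real.log_lt_iff_lt_exp (by linarith [pi_pos])).mpr this

noncomputable def LL : ℝ := Real.log (π/2)
noncomputable def Wf : ℝ → ℝ := fun t => sin t^2 - (1-LL)*(t*sin t*cos t) - LL*t^2
noncomputable def rf : ℝ → ℝ := fun t => Wf t / t^4
noncomputable def Ff : ℝ → ℝ := fun t => log t - log (sin t) + LL*(t*cos t/sin t)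

lemma hW_deriv (t : ℝ) : HasDerivAt Wf
    ((1+LL)*(sin t*cos t) - (1-LL)*(t*((cos t)^2-(sin t)^2)) - 2*LL*t) t := by
  have h1 : HasDerivAt (fun t : ℝ => sin t^2) (2*sin t*cos t) t := by
    have := (Real.hasDerivAt_sin t).pow 2
    exact this.congr_deriv (by ring)
  have h2 : HasDerivAt (fun t : ℝ => t*sin t*cos t)
      ((1*sin t + t*cos t)*cos t + (t*sin t)*(-sin t)) t :=
    (((hasDerivAt_id t).mul (Real.hasDerivAt_sin t))).mul (Real.hasDerivAt_cos t)
  have h3 : HasDerivAt (fun t : ℝ => LL*t^2) (LL*(2*t)) t := by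
    have := ((hasDerivAt_pow 2 t)).const_mul LL
    exact this.congr_deriv (by push_cast; ring)
  have := (h1.sub (h2.const_mul (1-LL))).sub h3
  exact this.congr_deriv (by ring)

lemma hr_deriv {t : ℝ} (ht : 0 < t) : HasDerivAt rf
    (((5-3*LL)*(t*sin t*cos t) - (1-LL)*t^2*((cos t)^2 - (sin t)^2) + 2*LL*t^2 - 4*(sin t)^2)/t^5) t := by
  have := (hW_deriv t).div (hasDerivAt_pow 4 t) (by positivity)
  refine this.congr_deriv ?_
  unfold Wf
  field_simp
  ring

lemma LLlb : (9/20:ℝ) < LL := L_lb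
lemma LLub : LL < (181/400:ℝ) := L_ub

lemma E_neg {t : ℝ} (ht : 0 < t) (ht2 : t < π/2) :
    (5-3*LL)*(t*sin t*cos t) - (1-LL)*t^2*((cos t)^2 - (sin t)^2) + 2*LL*t^2 - 4*(sin t)^2 < 0 := by
  have e1 := Elem ht ht2 (Or.inl rfl)
  have e2 := Elem ht ht2 (Or.inr rfl)
  set C : ℝ := -3*(t*sin t*cos t) + t^2*((cos t)^2-(sin t)^2) + 2*t^2 with hC
  rcases le_total 0 C with h | h
  · have := mul_le_mul_of_nonneg_right LLub.le h
    nlinarith [e2]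
  · have := mul_le_mul_of_nonpos_right LLlb.le h
    nlinarith [e1]

lemma rf_anti : StrictAntiOn rf (Ioc 0 (π/2)) := by
  apply strictAntiOn_of_deriv_neg (convex_Ioc 0 (π/2))
  · intro t ht
    exact ((hr_deriv ht.1).differentiableAt).continuousAt.continuousWithinAt
  · intro t ht
    rw [interior_Ioc] at ht
    rw [(hr_deriv ht.1).deriv]
    exact div_neg_of_neg_of_pos (E_neg ht.1 ht.2) (pow_pos ht.1 5)

lemma W_one_pos : 0 < Wf 1 := by
  have hs1l : (4241/5040:ℝ) ≤ sin 1 := by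
    have := sin_ge_t7 (by norm_num : (0:ℝ) ≤ 1); norm_num at this ⊢; linarith
  have hs1u : sin 1 ≤ (101/120:ℝ) := by
    have := sin_le_t5 (by norm_num : (0:ℝ) ≤ 1); norm_num at this ⊢; linarith
  have hc1l : (389/720:ℝ) ≤ cos 1 := by
    have := cos_ge_t6 (by norm_num : (0:ℝ) ≤ 1); norm_num at this ⊢; linarith
  have hc1u : cos 1 ≤ (13/24:ℝ) := by
    have := cos_le_t4 (by norm_num : (0:ℝ) ≤ 1); norm_num at this ⊢; linarith
  have hsc_hi : sin 1 * cos 1 ≤ (101/120:ℝ)*(13/24) :=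
    mul_le_mul hs1u hc1u (by linarith) (by norm_num)
  have hsc_lo : (4241/5040:ℝ)*(389/720) ≤ sin 1 * cos 1 :=
    mul_le_mul hs1l hc1l (by norm_num) (by linarith)
  have hs1sq : (4241/5040:ℝ)^2 ≤ sin 1^2 := by nlinarith
  have hllsc : (181/400:ℝ)*(sin 1*cos 1 - 1) ≤ LL*(sin 1*cos 1 - 1) :=
    mul_le_mul_of_nonpos_right LLub.le (by nlinarith)
  unfold Wf
  nlinarith [LLub, LLlb]

lemma W_pi_half_neg : Wf (π/2) < 0 := by
  unfold Wf
  rw [sin_pi_div_two, cos_pi_div_two]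
  have h : (1.570796:ℝ) < π/2 := by have := pi_gt_d6; linarith
  nlinarith [LLlb, h]

lemma one_lt_pi_half : (1:ℝ) < π/2 := by have := pi_gt_d6; linarith

lemma exists_t0 : ∃ t₀ ∈ Ioo (1:ℝ) (π/2), rf t₀ = 0 := by
  have hcont : ContinuousOn rf (Icc 1 (π/2)) := by
    intro t ht
    exact ((hr_deriv (lt_of_lt_of_le zero_lt_one ht.1)).differentiableAt).continuousAt.continuousWithinAt
  have hr1 : 0 < rf 1 := by
    unfold rf; simpa using W_one_pos
  have hrp : rf (π/2) < 0 := by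
    unfold rf
    apply div_neg_of_neg_of_pos W_pi_half_neg
    positivity
  have := intermediate_value_Icc' one_lt_pi_half.le hcont (by
    constructor <;> [exact hrp.le; exact hr1.le] : (0:ℝ) ∈ Icc (rf (π/2)) (rf 1))
  obtain ⟨t₀, ht₀, hrt₀⟩ := this
  refine ⟨t₀, ⟨?_, ?_⟩, hrt₀⟩
  · rcases eq_or_lt_of_le ht₀.1 with h | h
    · exfalso; rw [← h] at hrt₀; linarith
    · exact h
  · rcases eq_or_lt_of_le ht₀.2 with h | h
    · exfalso; rw [h] at hrt₀; linarith
    · exact h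

lemma hF_deriv {t : ℝ} (ht : 0 < t) (htp : t < π) :
    HasDerivAt Ff (Wf t/(t*(sin t)^2)) t := by
  have hs : 0 < sin t := sin_pos_of_pos_of_lt_pi ht htp
  have hs0 : sin t ≠ 0 := ne_of_gt hs
  have ht0 : t ≠ 0 := ne_of_gt ht
  have h1 : HasDerivAt (fun t : ℝ => log t) t⁻¹ t := Real.hasDerivAt_log ht0
  have h2 : HasDerivAt (fun t : ℝ => log (sin t)) ((sin t)⁻¹ * cos t) t :=
    (Real.hasDerivAt_log hs0).comp t (Real.hasDerivAt_sin t)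
  have h3 : HasDerivAt (fun t : ℝ => t*cos t)
      (1*cos t + t*(-sin t)) t := (hasDerivAt_id t).mul (Real.hasDerivAt_cos t)
  have h4 : HasDerivAt (fun t : ℝ => t*cos t/sin t)
      (((1*cos t + t*(-sin t))*sin t - (t*cos t)*cos t)/(sin t)^2) t :=
    h3.div (Real.hasDerivAt_sin t) hs0
  have := (h1.sub h2).add (h4.const_mul LL)
  refine this.congr_deriv ?_
  have hpy : (cos t)^2 = 1 - (sin t)^2 := by nlinarith [sin_sq_add_cos_sq t]
  unfold Wf
  field_simp
  ring_nf
  linear_combination (-(t^2*LL)) * hpy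

lemma hslope_sin : Tendsto (fun t : ℝ => sin t / t) (𝓝[>] 0) (𝓝 1) := by
  have h := hasDerivAt_iff_tendsto_slope.mp (Real.hasDerivAt_sin 0)
  rw [Real.cos_zero] at h
  have h2 : Tendsto (slope sin 0) (𝓝[>] (0:ℝ)) (𝓝 1) :=
    h.mono_left (nhdsWithin_mono 0 (fun x hx => ne_of_gt hx))
  apply h2.congr'
  filter_upwards [self_mem_nhdsWithin] with x hx
  rw [slope_def_field]
  simp

lemma hF_lim : Tendsto Ff (𝓝[>] 0) (𝓝 LL) := by
  have hcos : Tendsto (fun t : ℝ => cos t) (𝓝[>] 0) (𝓝 1) := by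
    have := (Real.continuous_cos.tendsto 0)
    rw [Real.cos_zero] at this
    exact this.mono_left nhdsWithin_le_nhds
  have hlog : Tendsto (fun t : ℝ => log (sin t / t)) (𝓝[>] 0) (𝓝 0) := by
    have := (Real.continuousAt_log one_ne_zero).tendsto.comp hslope_sin
    rw [Real.log_one] at this
    exact this
  have hinv : Tendsto (fun t : ℝ => (sin t / t)⁻¹) (𝓝[>] 0) (𝓝 1) := by
    have := hslope_sin.inv₀ one_ne_zero
    rw [inv_one] at this
    exact this
  have hall : Tendsto (fun t : ℝ => -(log (sin t / t)) + LL*(cos t * (sin t / t)⁻¹))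
      (𝓝[>] 0) (𝓝 LL) := by
    have := (hlog.neg).add ((hcos.mul hinv).const_mul LL)
    simpa using this
  apply hall.congr'
  filter_upwards [Ioo_mem_nhdsGT_of_mem (by constructor <;> norm_num : (0:ℝ) ∈ Ico 0 1)]
    with t ht
  have ht0 : 0 < t := ht.1
  have hsp : 0 < sin t := sin_pos_of_pos_of_lt_pi ht0 (by nlinarith [pi_gt_d6, ht.2])
  unfold Ff
  rw [Real.log_div (ne_of_gt hsp) (ne_of_gt ht0), inv_div]
  ring

lemma F_pi_half : Ff (π/2) = LL := by
  unfold Ff LL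
  rw [sin_pi_div_two, cos_pi_div_two, Real.log_one]
  ring

lemma main2F : ∀ t, 0 < t → t < π/2 → LL < Ff t := by
  obtain ⟨t₀, ht₀, hrt₀⟩ := exists_t0
  have ht₀p : 0 < t₀ := lt_trans zero_lt_one ht₀.1
  have hpi2 : (π/2:ℝ) < π := by nlinarith [pi_gt_d6]
  -- sign of W
  have hWpos : ∀ s, 0 < s → s < t₀ → 0 < Wf s := by
    intro s hs hst
    have h := rf_anti (mem_Ioc.2 ⟨hs, le_of_lt (lt_trans hst ht₀.2)⟩)
      (mem_Ioc.2 ⟨ht₀p, ht₀.2.le⟩) hst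
    rw [hrt₀] at h
    have h2 : 0 < rf s := h
    unfold rf at h2
    have h3 := mul_pos h2 (pow_pos hs 4)
    rwa [div_mul_cancel₀ _ (by positivity : (s:ℝ)^4 ≠ 0)] at h3
  have hWneg : ∀ s, t₀ < s → s ≤ π/2 → Wf s < 0 := by
    intro s hst hs2
    have h := rf_anti (mem_Ioc.2 ⟨ht₀p, ht₀.2.le⟩)
      (mem_Ioc.2 ⟨lt_trans ht₀p hst, hs2⟩) hst
    rw [hrt₀] at h
    have h2 : rf s < 0 := h
    unfold rf at h2
    have h4 : (0:ℝ) < s^4 := pow_pos (lt_trans ht₀p hst) 4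
    have h3 := mul_neg_of_neg_of_pos h2 h4
    rwa [div_mul_cancel₀ _ (by positivity : (s:ℝ)^4 ≠ 0)] at h3
  -- F increasing on Ioc 0 t₀
  have hmono : StrictMonoOn Ff (Ioc 0 t₀) := by
    apply strictMonoOn_of_deriv_pos (convex_Ioc 0 t₀)
    · intro s hs
      exact ((hF_deriv hs.1 (by nlinarith [ht₀.2, hs.2])).differentiableAt).continuousAt.continuousWithinAt
    · intro s hs
      rw [interior_Ioc] at hs
      rw [(hF_deriv hs.1 (by nlinarith [ht₀.2, hs.2])).deriv]
      apply div_pos (hWpos s hs.1 hs.2)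
      have hsin := sin_pos_of_pos_of_lt_pi hs.1 (by nlinarith [ht₀.2, hs.2])
      exact mul_pos hs.1 (pow_pos hsin 2)
  have hanti : StrictAntiOn Ff (Icc t₀ (π/2)) := by
    apply strictAntiOn_of_deriv_neg (convex_Icc t₀ (π/2))
    · intro s hs
      have hs0 : 0 < s := lt_of_lt_of_le ht₀p hs.1
      exact ((hF_deriv hs0 (lt_of_le_of_lt hs.2 hpi2)).differentiableAt).continuousAt.continuousWithinAt
    · intro s hs
      rw [interior_Icc] at hs
      have hs0 : 0 < s := lt_trans ht₀p hs.1
      rw [(hF_deriv hs0 (lt_trans hs.2 hpi2)).deriv]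
      apply div_neg_of_neg_of_pos (hWneg s hs.1 hs.2.le)
      have hsin := sin_pos_of_pos_of_lt_pi hs0 (lt_trans hs.2 hpi2)
      exact mul_pos hs0 (pow_pos hsin 2)
  intro t ht htp
  rcases le_or_gt t t₀ with hcase | hcase
  · -- t ≤ t₀ : use limit
    have hτ : t/2 ∈ Ioc 0 t₀ := ⟨by linarith, by linarith⟩
    have hLleF : LL ≤ Ff (t/2) := by
      apply le_of_tendsto hF_lim
      filter_upwards [Ioo_mem_nhdsGT_of_mem
        (⟨le_refl 0, by linarith⟩ : (0:ℝ) ∈ Ico 0 (t/2))] with s hs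
      exact (hmono (mem_Ioc.2 ⟨hs.1, by linarith [hs.1, hs.2]⟩) hτ hs.2).le
    have : Ff (t/2) < Ff t := hmono hτ (mem_Ioc.2 ⟨ht, hcase⟩) (by linarith)
    linarith
  · -- t₀ < t
    have := hanti (mem_Icc.2 ⟨hcase.le, htp.le⟩) (mem_Icc.2 ⟨ht₀.2.le, le_refl _⟩) htp
    rw [F_pi_half] at this
    exact this

lemma main2 {t : ℝ} (ht : 0 < t) (htp : t < π/2) :
    log (sin t / t) < log (π/2) * (t * cos t / sin t - 1) := by
  have h := main2F t ht htp
  have hsp : 0 < sin t := sin_pos_of_pos_of_lt_pi ht (by nlinarith [pi_gt_d6])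
  unfold Ff LL at h
  rw [Real.log_div (ne_of_gt hsp) (ne_of_gt ht)]
  nlinarith [h]


private lemma main1 {t : ℝ} (ht : 0 < t) (htp : t < π/2) :
    (t * cos t / sin t - 1)/2 < log (sin t / t) := by
  have hpi : t < π := by nlinarith [pi_gt_d6]
  have hs : 0 < sin t := sin_pos_of_pos_of_lt_pi ht hpi
  have hx1 : sin t / t < 1 := (div_lt_one ht).2 (sin_lt ht)
  have hx0 : 0 < sin t / t := div_pos hs ht
  have hlog := log_gt_half hx0 hx1
  have key : t * cos t / sin t - 1 ≤ sin t / t - 1/(sin t / t) := by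
    rw [one_div_div]
    have e1 : t * cos t / sin t - 1 = (t * cos t - sin t)/sin t := by
      field_simp
    have e2 : sin t / t - t / sin t = (sin t * sin t - t * t)/(t * sin t) := by
      field_simp
    rw [e1, e2, div_le_div_iff₀ hs (mul_pos ht hs)]
    nlinarith [mul_lt_mul_of_pos_left (K1 ht htp) hs]
  linarith

private lemma key_thm (a b : ℝ) (ha : 0 < a) (hb : 0 < b) (hab : b < a) :
    Real.sqrt (A a b * X a b) < P a b ∧
    P a b < (A a b * X a b ^ (log (π/2) / log (2 * exp 1 / π))) ^
      (1 / (1 + log (π/2) / log (2 * exp 1 / π))) := by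
  set x : ℝ := (a - b)/(a + b) with hxdef
  have hab2 : 0 < a + b := by linarith
  have hx0 : 0 < x := div_pos (by linarith) hab2
  have hx1 : x < 1 := by rw [hxdef, div_lt_one hab2]; linarith
  set t : ℝ := arcsin x with htdef
  have ht : 0 < t := Real.arcsin_pos.2 hx0
  have htp : t < π/2 := Real.arcsin_lt_pi_div_two.2 hx1
  have hsin : sin t = x := Real.sin_arcsin (by linarith) hx1.le
  have hs : 0 < sin t := by rw [hsin]; exact hx0
  have hA : 0 < A a b := by unfold A; linarith
  -- P = A * sin t / t
  have hP : P a b = A a b * (sin t / t) := by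
    unfold P A
    rw [← hxdef, ← htdef, hsin, hxdef]
    field_simp
  have hPpos : 0 < P a b := by rw [hP]; exact mul_pos hA (div_pos hs ht)
  -- G = A * cos t
  have hcos : cos t = 2 * Real.sqrt (a*b) / (a + b) := by
    rw [htdef, Real.cos_arcsin]
    have hh : 1 - x^2 = (2 * Real.sqrt (a*b) / (a+b))^2 := by
      have hss := Real.sq_sqrt (by positivity : (0:ℝ) ≤ a*b)
      have hsa := Real.sq_sqrt ha.le
      have hsb := Real.sq_sqrt hb.le
      rw [hxdef]
      field_simp
      linear_combination -4*hss
    rw [hh, Real.sqrt_sq (by positivity)]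
  have hG : G a b = A a b * cos t := by
    unfold G A
    rw [hcos]
    field_simp
  have hGP : G a b / P a b = t * cos t / sin t := by
    rw [hG, hP]
    rw [div_eq_div_iff (by positivity) (ne_of_gt hs)]
    field_simp
  have hX : X a b = A a b * exp (t * cos t / sin t - 1) := by
    unfold X; rw [hGP]
  set g : ℝ := t * cos t / sin t - 1 with hgdef
  constructor
  · -- first inequality
    have h1 : A a b * X a b = (A a b * A a b) * exp g := by
      rw [hX]; ring
    have h2 : Real.sqrt (A a b * X a b) = A a b * exp (g/2) := by
      rw [h1, Real.sqrt_mul (by positivity), Real.sqrt_mul_self hA.le, Real.exp_half]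
    rw [h2, hP]
    apply mul_lt_mul_of_pos_left _ hA
    have hlt : exp (g/2) < exp (log (sin t / t)) :=
      Real.exp_lt_exp.2 (main1 ht htp)
    rwa [Real.exp_log (div_pos hs ht)] at hlt
  · -- second inequality
    set L : ℝ := log (π/2) with hLdef
    have hL1 : L < 1 := by
      have := L_ub; rw [hLdef]; linarith
    have h1L : (0:ℝ) < 1 - L := by linarith
    have hbeta : log (2 * exp 1 / π) = 1 - L := by
      rw [Real.log_div (by positivity) (ne_of_gt pi_pos), Real.log_mul two_ne_zero
        (ne_of_gt (exp_pos 1)), Real.log_exp, hLdef,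
        Real.log_div (ne_of_gt pi_pos) two_ne_zero]
      ring
    rw [hbeta]
    set β : ℝ := L / (1 - L) with hbdef
    have hβ1 : 1 + β = 1/(1-L) := by rw [hbdef]; field_simp; ring
    have hβ2 : 1/(1 + β) = 1 - L := by rw [hβ1]; field_simp
    have hβ3 : β * (1 - L) = L := by rw [hbdef]; field_simp
    have hXpos : 0 < X a b := by rw [hX]; positivity
    -- rewrite RHS
    have e1 : X a b ^ β = A a b ^ β * exp (g*β) := by
      rw [hX, Real.mul_rpow hA.le (exp_pos g).le, ← Real.exp_mul]
    have e2 : A a b * (A a b ^ β * exp (g*β)) = A a b ^ (1+β) * exp (g*β) := by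
      rw [Real.rpow_add hA, Real.rpow_one]; ring
    have e3 : (A a b ^ (1+β) * exp (g*β)) ^ (1/(1+β)) = A a b * exp (g*L) := by
      rw [hβ2, Real.mul_rpow (by positivity) (exp_pos _).le, ← Real.exp_mul,
        ← Real.rpow_mul hA.le]
      rw [show (1+β)*(1-L) = 1 by rw [hβ1]; field_simp, Real.rpow_one,
        show g*β*(1-L) = g*L by rw [mul_assoc, hβ3]]
    have hrhs : (A a b * X a b ^ β) ^ (1/(1+β)) = A a b * exp (g * L) := by
      rw [e1, e2, e3]
    rw [hrhs, hP]
    apply mul_lt_mul_of_pos_left _ hA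
    have hlt : exp (log (sin t / t)) < exp (g*L) := by
      apply Real.exp_lt_exp.2
      have := main2 ht htp
      rw [hgdef, hLdef]
      rw [← hLdef]
      calc log (sin t/t) < L * (t * cos t / sin t - 1) := by rw [hLdef]; exact this
        _ = (t * cos t / sin t - 1) * L := by ring
    rwa [Real.exp_log (div_pos hs ht)] at hlt

theorem sandor_thm30 (a b : ℝ) (ha : 0 < a) (hb : 0 < b) (hab : a ≠ b) :
    Real.sqrt (A a b * X a b) < P a b ∧
    P a b < (A a b * X a b ^ (log (π/2) / log (2 * exp 1 / π))) ^
      (1 / (1 + log (π/2) / log (2 * exp 1 / π))) := by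
  have hAs : A a b = A b a := by unfold A; ring
  have hGs : G a b = G b a := by unfold G; rw [mul_comm]
  have hPs : P a b = P b a := by
    unfold P
    rw [show (a-b)/(a+b) = -((b-a)/(b+a)) by ring, Real.arcsin_neg, mul_neg,
      show a - b = -(b-a) by ring, neg_div, div_neg, neg_neg]
  have hXs : X a b = X b a := by unfold X; rw [hAs, hGs, hPs]
  rcases lt_trichotomy b a with h | h | h
  · exact key_thm a b ha hb h
  · exact absurd h.symm hab
  · rw [hAs, hXs, hPs]
    exact key_thm b a hb ha h
end
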